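/- The function V_L is strictly concave on the convex set [0,∞) × [0,∞) ⊆ ℝ²: for all distinct points (n0,n1), (m0,m1) in [0,∞)×[0,∞) and all t ∈ (0,1), V_L(t·n0 + (1−t)·m0, t·n1 + (1−t)·m1) > t·V_L(n0,n1) + (1−t)·V_L(m0,m1). -/

import Mathlib

/-- The denominator `D(n0,n1) = σ²(n0+n1+2 n0 n1) + (1+n0)(1+n1)`. -/
noncomputable def Dden (σ n0 n1 : ℝ) : ℝ :=
  σ^2 * (n0 + n1 + 2*n0*n1) + (1+n0)*(1+n1)

/-- Forecaster value `V_L`. -/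
noncomputable def VL (σ n0 n1 : ℝ) : ℝ :=
  σ^4 * (n0 + n1 + 2*n0*n1) / Dden σ n0 n1

/-- Nowcaster value `V_S`. -/
noncomputable def VS (σ n0 n1 : ℝ) : ℝ :=
  VL σ n0 n1 + (3*σ^2*n0*n1 + 2*σ^2*n1 + n1 + n0*n1) / Dden σ n0 n1

lemma mix_pos (x y t : ℝ) (hx : 0 < x) (hy : 0 < y) (ht0 : 0 ≤ t) (ht1 : t ≤ 1) :
    0 < t*x+(1-t)*y := by
  rcases eq_or_lt_of_le ht0 with h | h
  · simp [← h, hy]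
  · nlinarith [mul_pos h hx, mul_nonneg (by linarith : (0:ℝ) ≤ 1-t) hy.le]

lemma inv_conv (x y t : ℝ) (hx : 0 < x) (hy : 0 < y) (ht0 : 0 ≤ t) (ht1 : t ≤ 1) :
    1/(t*x+(1-t)*y) ≤ t*(1/x)+(1-t)*(1/y) := by
  have hm : 0 < t*x+(1-t)*y := mix_pos x y t hx hy ht0 ht1
  have h1 : t*(1/x)+(1-t)*(1/y) - 1/(t*x+(1-t)*y)
      = t*(1-t)*(x-y)^2/(x*y*(t*x+(1-t)*y)) := by
    field_simp
    ring
  have h2 : 0 ≤ t*(1-t)*(x-y)^2/(x*y*(t*x+(1-t)*y)) :=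
    div_nonneg (mul_nonneg (mul_nonneg ht0 (by linarith)) (sq_nonneg _))
      (le_of_lt (mul_pos (mul_pos hx hy) hm))
  linarith

lemma inv_sconv (x y t : ℝ) (hx : 0 < x) (hy : 0 < y) (hxy : x ≠ y)
    (ht0 : 0 < t) (ht1 : t < 1) :
    1/(t*x+(1-t)*y) < t*(1/x)+(1-t)*(1/y) := by
  have hm : 0 < t*x+(1-t)*y := mix_pos x y t hx hy ht0.le ht1.le
  have h1 : t*(1/x)+(1-t)*(1/y) - 1/(t*x+(1-t)*y)
      = t*(1-t)*(x-y)^2/(x*y*(t*x+(1-t)*y)) := by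
    field_simp
    ring
  have hsq : 0 < (x-y)^2 := by
    have := sub_ne_zero.mpr hxy
    positivity
  have h2 : 0 < t*(1-t)*(x-y)^2/(x*y*(t*x+(1-t)*y)) :=
    div_pos (mul_pos (mul_pos ht0 (by linarith)) hsq) (mul_pos (mul_pos hx hy) hm)
  linarith

lemma Dden_pos (σ n0 n1 : ℝ) (hn0 : 0 ≤ n0) (hn1 : 0 ≤ n1) : 0 < Dden σ n0 n1 := by
  unfold Dden
  nlinarith [mul_nonneg hn0 hn1, mul_nonneg (sq_nonneg σ) hn0,
    mul_nonneg (sq_nonneg σ) hn1, mul_nonneg (mul_nonneg (sq_nonneg σ) hn0) hn1]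

lemma VL_eq (σ n0 n1 : ℝ) (hn0 : 0 ≤ n0) (hn1 : 0 ≤ n1) :
    VL σ n0 n1 = σ^2 - σ^2 / (2*σ^2+1 - σ^2*(1/(1+n0)+1/(1+n1))) := by
  have h0 : (0:ℝ) < 1+n0 := by linarith
  have h1 : (0:ℝ) < 1+n1 := by linarith
  have hD : 0 < Dden σ n0 n1 := Dden_pos σ n0 n1 hn0 hn1
  have hEeq : 2*σ^2+1 - σ^2*(1/(1+n0)+1/(1+n1)) = Dden σ n0 n1 / ((1+n0)*(1+n1)) := by
    unfold Dden
    field_simp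
    ring
  rw [VL, hEeq, div_div_eq_mul_div]
  rw [eq_sub_iff_add_eq, ← add_div, div_eq_iff hD.ne']
  unfold Dden
  ring

lemma E_ge_one (σ n0 n1 : ℝ) (hn0 : 0 ≤ n0) (hn1 : 0 ≤ n1) :
    (1:ℝ) ≤ 2*σ^2+1 - σ^2*(1/(1+n0)+1/(1+n1)) := by
  have h0 : (0:ℝ) < 1+n0 := by linarith
  have h1 : (0:ℝ) < 1+n1 := by linarith
  have a0 : 1/(1+n0) ≤ 1 := by rw [div_le_one h0]; linarith
  have a1 : 1/(1+n1) ≤ 1 := by rw [div_le_one h1]; linarith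
  nlinarith [sq_nonneg σ]

/-- `V_L` is strictly concave on `[0,∞) × [0,∞)`. -/
theorem stmt2 (σ : ℝ) (hσ : 0 < σ)
    (n0 n1 m0 m1 t : ℝ)
    (hn0 : 0 ≤ n0) (hn1 : 0 ≤ n1) (hm0 : 0 ≤ m0) (hm1 : 0 ≤ m1)
    (hne : (n0, n1) ≠ (m0, m1)) (ht0 : 0 < t) (ht1 : t < 1) :
    t * VL σ n0 n1 + (1-t) * VL σ m0 m1 <
      VL σ (t*n0 + (1-t)*m0) (t*n1 + (1-t)*m1) := by
  have hσ2 : 0 < σ^2 := by positivity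
  have hp0 : (0:ℝ) < 1+n0 := by linarith
  have hp1 : (0:ℝ) < 1+n1 := by linarith
  have hq0 : (0:ℝ) < 1+m0 := by linarith
  have hq1 : (0:ℝ) < 1+m1 := by linarith
  have hk0 : 0 ≤ t*n0 + (1-t)*m0 := by nlinarith
  have hk1 : 0 ≤ t*n1 + (1-t)*m1 := by nlinarith
  -- the g-values
  set A : ℝ := 1/(1+n0)+1/(1+n1) with hA
  set B : ℝ := 1/(1+m0)+1/(1+m1) with hB
  set C : ℝ := 1/(1+(t*n0+(1-t)*m0))+1/(1+(t*n1+(1-t)*m1)) with hC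
  -- strict convexity of g
  have hg : C < t*A + (1-t)*B := by
    have e0 : 1+(t*n0+(1-t)*m0) = t*(1+n0)+(1-t)*(1+m0) := by ring
    have e1 : 1+(t*n1+(1-t)*m1) = t*(1+n1)+(1-t)*(1+m1) := by ring
    rw [hC, hA, hB, e0, e1]
    have hcase : n0 ≠ m0 ∨ n1 ≠ m1 := by
      by_contra h
      push_neg at h
      exact hne (by rw [h.1, h.2])
    rcases hcase with h | h
    · have s0 := inv_sconv (1+n0) (1+m0) t hp0 hq0 (by intro hc; exact h (by linarith)) ht0 ht1
      have s1 := inv_conv (1+n1) (1+m1) t hp1 hq1 ht0.le ht1.le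
      linarith
    · have s0 := inv_conv (1+n0) (1+m0) t hp0 hq0 ht0.le ht1.le
      have s1 := inv_sconv (1+n1) (1+m1) t hp1 hq1 (by intro hc; exact h (by linarith)) ht0 ht1
      linarith
  -- the E-values
  set EN : ℝ := 2*σ^2+1 - σ^2*A with hEN
  set EM : ℝ := 2*σ^2+1 - σ^2*B with hEM
  set EC : ℝ := 2*σ^2+1 - σ^2*C with hEC
  have hEN1 : (1:ℝ) ≤ EN := E_ge_one σ n0 n1 hn0 hn1
  have hEM1 : (1:ℝ) ≤ EM := E_ge_one σ m0 m1 hm0 hm1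
  have hENp : 0 < EN := by linarith
  have hEMp : 0 < EM := by linarith
  have hmixE : t*EN + (1-t)*EM < EC := by
    rw [hEN, hEM, hEC]
    nlinarith [mul_lt_mul_of_pos_left hg hσ2]
  have hmixp : 0 < t*EN + (1-t)*EM := mix_pos EN EM t hENp hEMp ht0.le ht1.le
  have hECp : 0 < EC := lt_trans hmixp hmixE
  -- key: 1/EC < t/EN + (1-t)/EM
  have hkey : 1/EC < t*(1/EN)+(1-t)*(1/EM) := by
    have h1 : 1/EC < 1/(t*EN+(1-t)*EM) := by
      apply one_div_lt_one_div_of_lt hmixp hmixE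
    have h2 := inv_conv EN EM t hENp hEMp ht0.le ht1.le
    linarith
  -- rewrite VL
  rw [VL_eq σ n0 n1 hn0 hn1, VL_eq σ m0 m1 hm0 hm1, VL_eq σ _ _ hk0 hk1]
  rw [← hA, ← hB, ← hC, ← hEN, ← hEM, ← hEC]
  have hmul := mul_lt_mul_of_pos_left hkey hσ2
  have e1 : σ^2 * (1/EC) = σ^2/EC := by ring
  have e2 : σ^2 * (t*(1/EN)+(1-t)*(1/EM)) = t*(σ^2/EN)+(1-t)*(σ^2/EM) := by ring
  rw [e1, e2] at hmul
  have e3 : t*(σ^2-σ^2/EN)+(1-t)*(σ^2-σ^2/EM)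
      = σ^2 - (t*(σ^2/EN)+(1-t)*(σ^2/EM)) := by ring
  linarith
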